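/- arXiv:2509.21608 — 4 statements merged into one kernel-verified Lean document; each statement's English description precedes it below -/
import Mathlib

section
/- Let w : (0,∞) → (0,∞) be continuous with w and w⁻¹ locally integrable on ℝ⁺, and suppose sup_{s ≥ t} w(s−t)/w(s) < ∞ for every t ≥ 0. Then for every x ≥ 0 the point evaluation f ↦ f(x) is a bounded linear functional on the weighted Sobolev space H¹_w(ℝ⁺) = {f ∈ L²_w : f weakly differentiable, f' ∈ L²_w}; i.e. there is a constant C_x such that |f(x)| ≤ C_x (‖f‖_{L²_w} + ‖f'‖_{L²_w}) for all f ∈ H¹_w. -/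
open MeasureTheory Set

private lemma amgm_pt (a v l : ℝ) (hv : 0 < v) (hl : 0 < l) :
    |a| ≤ (l * (a ^ 2 * v) + v⁻¹ / l) / 2 := by
  have hlv : 0 < l * v := mul_pos hl hv
  have h1 : (l * v) * (l * v)⁻¹ = 1 := mul_inv_cancel₀ hlv.ne'
  have h2 : v⁻¹ / l = (l * v)⁻¹ := by
    rw [mul_inv]; ring
  rw [h2, le_div_iff₀ (by norm_num : (0:ℝ) < 2)]
  have hexp : (l * (a ^ 2 * v) + (l * v)⁻¹ - |a| * 2) * (l * v) = (l * v * |a| - 1) ^ 2 := by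
    have hs : |a| ^ 2 = a ^ 2 := sq_abs a
    have h1' : (l * v)⁻¹ * (l * v) = 1 := inv_mul_cancel₀ hlv.ne'
    linear_combination h1' - (l * v) ^ 2 * hs
  have h := sq_nonneg (l * v * |a| - 1)
  rw [← hexp] at h
  nlinarith [h, hlv]

private lemma opt_lambda (a b c : ℝ) (ha : 0 ≤ a) (hb : 0 ≤ b)
    (h : ∀ l : ℝ, 0 < l → c ≤ l * a + b / l) :
    c ≤ 2 * Real.sqrt a * Real.sqrt b := by
  refine le_of_forall_pos_le_add fun ε hε => ?_
  set sa := Real.sqrt a with hsadef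
  set sb := Real.sqrt b with hsbdef
  have hsa : 0 ≤ sa := Real.sqrt_nonneg a
  have hsb : 0 ≤ sb := Real.sqrt_nonneg b
  have ha2 : sa ^ 2 = a := Real.sq_sqrt ha
  have hb2 : sb ^ 2 = b := Real.sq_sqrt hb
  set δ := ε / (sa + sb + 1) with hδdef
  have hδ : 0 < δ := div_pos hε (by linarith)
  have hl : 0 < (sb + δ) / (sa + δ) := div_pos (by linarith) (by linarith)
  have hc := h _ hl
  have k1 : (sb + δ) / (sa + δ) * a ≤ sa * sb + δ * sa := by
    rw [div_mul_eq_mul_div, div_le_iff₀ (by linarith)]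
    nlinarith [ha2, mul_nonneg (mul_nonneg hsa hδ.le) (add_nonneg hsb hδ.le)]
  have k2 : b / ((sb + δ) / (sa + δ)) ≤ sa * sb + δ * sb := by
    rw [div_div_eq_mul_div, div_le_iff₀ (by linarith)]
    nlinarith [hb2, mul_nonneg (mul_nonneg hsb hδ.le) (add_nonneg hsa hδ.le)]
  have k3 : δ * (sa + sb) ≤ ε := by
    rw [hδdef, div_mul_eq_mul_div, div_le_iff₀ (by linarith)]
    nlinarith
  linarith

/-- On the weighted Sobolev space `H¹_w(ℝ⁺)` with an admissible weight `w`,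
every point evaluation `f ↦ f x` (for `x ≥ 0`) is a bounded linear functional:
`|f x| ≤ C_x (‖f‖_{L²_w} + ‖f'‖_{L²_w})`. Membership in `H¹_w` is expressed through an
absolutely continuous representative `f` with derivative `f'` (FTC form) and the weighted
square integrability of `f` and `f'`. -/
theorem stmt0 (w : ℝ → ℝ)
    (hw_pos : ∀ x : ℝ, 0 < x → 0 < w x)
    (hw_cont : ContinuousOn w (Set.Ioi 0))
    (hw_loc : LocallyIntegrableOn w (Set.Ici 0))
    (hwinv_loc : LocallyIntegrableOn (fun x => (w x)⁻¹) (Set.Ici 0))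
    (hw_adm : ∀ t : ℝ, 0 ≤ t → ∃ M : ℝ, ∀ s : ℝ, t ≤ s → w (s - t) / w s ≤ M) :
    ∀ x : ℝ, 0 ≤ x → ∃ C : ℝ, 0 ≤ C ∧
      ∀ f f' : ℝ → ℝ, Measurable f → Measurable f' →
        (∀ a b : ℝ, 0 ≤ a → a ≤ b → f b - f a = ∫ s in a..b, f' s) →
        IntegrableOn (fun s => (f s) ^ 2 * w s) (Set.Ioi 0) →
        IntegrableOn (fun s => (f' s) ^ 2 * w s) (Set.Ioi 0) →
        |f x| ≤ C * (Real.sqrt (∫ s in Set.Ioi (0:ℝ), (f s) ^ 2 * w s)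
                   + Real.sqrt (∫ s in Set.Ioi (0:ℝ), (f' s) ^ 2 * w s)) := by
  intro x hx
  set I : Set ℝ := Ioc x (x + 1) with hIdef
  have hImeas : MeasurableSet I := measurableSet_Ioc
  have hIsub : I ⊆ Ioi 0 := fun s hs => hx.trans_lt hs.1
  have hKint : IntegrableOn (fun s => (w s)⁻¹) I volume := by
    have h1 : IntegrableOn (fun s => (w s)⁻¹) (Icc x (x + 1)) volume :=
      hwinv_loc.integrableOn_compact_subset (fun s hs => le_trans hx hs.1) isCompact_Icc
    exact h1.mono_set Ioc_subset_Icc_self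
  set K := ∫ s in I, (w s)⁻¹ with hKdef
  have hK0 : 0 ≤ K :=
    setIntegral_nonneg hImeas fun s hs => inv_nonneg.mpr (hw_pos s (hIsub hs)).le
  refine ⟨Real.sqrt (2 * K), Real.sqrt_nonneg _, ?_⟩
  intro f f' hfm hf'm hftc hfint hf'int
  set N1 := ∫ s in Ioi (0:ℝ), f s ^ 2 * w s with hN1def
  set N2 := ∫ s in Ioi (0:ℝ), f' s ^ 2 * w s with hN2def
  have hN1 : 0 ≤ N1 :=
    setIntegral_nonneg measurableSet_Ioi fun s hs => mul_nonneg (sq_nonneg _) (hw_pos s hs).le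
  have hN2 : 0 ≤ N2 :=
    setIntegral_nonneg measurableSet_Ioi fun s hs => mul_nonneg (sq_nonneg _) (hw_pos s hs).le
  -- main step: weighted bound on ∫ |g| over I
  have step : ∀ g : ℝ → ℝ, Measurable g →
      IntegrableOn (fun s => g s ^ 2 * w s) (Ioi 0) volume →
      IntegrableOn (fun s => |g s|) I volume ∧
      ∀ l : ℝ, 0 < l →
        (∫ s in I, |g s|) ≤ (l * (∫ s in Ioi (0:ℝ), g s ^ 2 * w s) + K / l) / 2 := by
    intro g hgm hgint
    have hgI : IntegrableOn (fun s => g s ^ 2 * w s) I volume := hgint.mono_set hIsub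
    have hbound : ∀ l : ℝ, 0 < l → ∀ s ∈ I,
        |g s| ≤ (l * (g s ^ 2 * w s) + (w s)⁻¹ / l) / 2 :=
      fun l hl s hs => amgm_pt (g s) (w s) l (hw_pos s (hIsub hs)) hl
    have hmaj : ∀ l : ℝ, 0 < l →
        IntegrableOn (fun s => (l * (g s ^ 2 * w s) + (w s)⁻¹ / l) / 2) I volume :=
      fun l hl => ((hgI.const_mul l).add (hKint.div_const l)).div_const 2
    have habs : IntegrableOn (fun s => |g s|) I volume := by
      refine Integrable.mono' (hmaj 1 one_pos) hgm.abs.aestronglyMeasurable ?_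
      refine (ae_restrict_iff' hImeas).mpr (Filter.Eventually.of_forall fun s hs => ?_)
      rw [Real.norm_eq_abs, abs_abs]
      exact hbound 1 one_pos s hs
    refine ⟨habs, fun l hl => ?_⟩
    have h1 : (∫ s in I, |g s|) ≤ ∫ s in I, (l * (g s ^ 2 * w s) + (w s)⁻¹ / l) / 2 :=
      setIntegral_mono_on habs (hmaj l hl) hImeas (hbound l hl)
    have h2 : (∫ s in I, (l * (g s ^ 2 * w s) + (w s)⁻¹ / l) / 2)
        = (l * (∫ s in I, g s ^ 2 * w s) + K / l) / 2 := by
      rw [integral_div, integral_add (hgI.const_mul l) (hKint.div_const l),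
        integral_const_mul, integral_div]
    have h3 : (∫ s in I, g s ^ 2 * w s) ≤ ∫ s in Ioi (0:ℝ), g s ^ 2 * w s := by
      refine setIntegral_mono_set hgint ?_ hIsub.eventuallyLE
      exact (ae_restrict_iff' measurableSet_Ioi).mpr
        (Filter.Eventually.of_forall fun s hs => mul_nonneg (sq_nonneg _) (hw_pos s hs).le)
    have h4 : l * (∫ s in I, g s ^ 2 * w s) ≤ l * (∫ s in Ioi (0:ℝ), g s ^ 2 * w s) :=
      mul_le_mul_of_nonneg_left h3 hl.le
    rw [h2] at h1
    linarith
  obtain ⟨hfabs, hfstep⟩ := step f hfm hfint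
  obtain ⟨hf'abs, hf'step⟩ := step f' hf'm hf'int
  set c2 := ∫ s in I, |f' s| with hc2def
  have hptwise : ∀ y ∈ I, |f x| ≤ |f y| + c2 := by
    intro y hy
    have hxy : x ≤ y := hy.1.le
    have heq : f x = f y - ∫ s in x..y, f' s := by
      have := hftc x y hx hxy; linarith
    have h1 : |f x| ≤ |f y| + |∫ s in x..y, f' s| := by
      rw [heq]; exact abs_sub _ _
    have h2 : |∫ s in x..y, f' s| ≤ ∫ s in Ioc x y, |f' s| := by
      calc |∫ s in x..y, f' s| ≤ ∫ s in x..y, |f' s| :=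
            intervalIntegral.abs_integral_le_integral_abs hxy
        _ = ∫ s in Ioc x y, |f' s| := intervalIntegral.integral_of_le hxy
    have h3 : (∫ s in Ioc x y, |f' s|) ≤ c2 := by
      refine setIntegral_mono_set hf'abs ?_ (Ioc_subset_Ioc_right hy.2).eventuallyLE
      exact (ae_restrict_iff' hImeas).mpr
        (Filter.Eventually.of_forall fun s _ => abs_nonneg _)
    linarith
  have hvol : (volume I).toReal = 1 := by
    rw [hIdef, Real.volume_Ioc, ENNReal.toReal_ofReal (by linarith)]; ring
  have hvolfin : volume I < ⊤ := by
    rw [hIdef, Real.volume_Ioc]; exact ENNReal.ofReal_lt_top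
  have hB : |f x| ≤ (∫ s in I, |f s|) + c2 := by
    have hfx : |f x| = ∫ _ in I, |f x| := by rw [setIntegral_const, measureReal_def, hvol, one_smul]
    have hconst : IntegrableOn (fun _ : ℝ => c2) I volume :=
      integrableOn_const hvolfin.ne
    have hmono : (∫ _ in I, |f x|) ≤ ∫ s in I, (|f s| + c2) :=
      setIntegral_mono_on (integrableOn_const hvolfin.ne) (hfabs.add hconst)
        hImeas hptwise
    have heq2 : (∫ s in I, (|f s| + c2)) = (∫ s in I, |f s|) + c2 := by
      rw [integral_add hfabs hconst, setIntegral_const, measureReal_def, hvol, one_smul]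
    rw [hfx]; rw [heq2] at hmono; exact hmono
  have hall : ∀ l : ℝ, 0 < l → |f x| ≤ l * ((N1 + N2) / 2) + K / l := by
    intro l hl
    have s1 := hfstep l hl
    have s2 := hf'step l hl
    have hid : l * ((N1 + N2) / 2) + K / l
        = (l * N1 + K / l) / 2 + (l * N2 + K / l) / 2 := by ring
    rw [hid]
    linarith
  have hmain := opt_lambda ((N1 + N2) / 2) K (|f x|) (by linarith) hK0 hall
  have e1 : Real.sqrt (N1 + N2) ≤ Real.sqrt N1 + Real.sqrt N2 := by
    have h12 : N1 + N2 ≤ (Real.sqrt N1 + Real.sqrt N2) ^ 2 := by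
      nlinarith [Real.sq_sqrt hN1, Real.sq_sqrt hN2, Real.sqrt_nonneg N1, Real.sqrt_nonneg N2,
        mul_nonneg (Real.sqrt_nonneg N1) (Real.sqrt_nonneg N2)]
    calc Real.sqrt (N1 + N2) ≤ Real.sqrt ((Real.sqrt N1 + Real.sqrt N2) ^ 2) :=
          Real.sqrt_le_sqrt h12
      _ = Real.sqrt N1 + Real.sqrt N2 := Real.sqrt_sq (by positivity)
  have e2 : Real.sqrt (2 * K) = Real.sqrt 2 * Real.sqrt K := Real.sqrt_mul (by norm_num) K
  have e3 : Real.sqrt ((N1 + N2) / 2) = Real.sqrt (N1 + N2) / Real.sqrt 2 :=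
    Real.sqrt_div (by linarith) 2
  have h2 : Real.sqrt 2 * Real.sqrt 2 = 2 := Real.mul_self_sqrt (by norm_num)
  have hs2 : 0 < Real.sqrt 2 := by positivity
  have e4 : 2 * Real.sqrt ((N1 + N2) / 2) * Real.sqrt K
      = Real.sqrt 2 * Real.sqrt (N1 + N2) * Real.sqrt K := by
    rw [e3]; field_simp
    linear_combination (-(Real.sqrt (N1 + N2) * Real.sqrt K)) * h2
  have e5 : Real.sqrt 2 * Real.sqrt (N1 + N2) * Real.sqrt K
      ≤ Real.sqrt (2 * K) * (Real.sqrt N1 + Real.sqrt N2) := by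
    rw [e2]
    have := mul_le_mul_of_nonneg_left e1
      (show (0:ℝ) ≤ Real.sqrt 2 * Real.sqrt K by positivity)
    nlinarith [this]
  rw [e4] at hmain
  linarith
end

section
/- Let H ∈ (0,1/2), K(t) = t^{H−1/2}, w(x) = x^β e^{−x} with β ∈ (1−2H, 1). Then for every q < 2/(2−2H−β) (which exceeds 2 since β > 1−2H) and every T > 0, ∫₀^T ‖K(s+·)‖_{H¹_w}^q ds < ∞; in particular ∫₀^T (∫₀^∞ (s+x)^{2H−3} x^β e^{−x} dx)^{q/2} ds ≤ C T^{q(2H−ε+β−2)/2+1} for every small ε > 0 with the exponent nonnegative. -/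
open MeasureTheory Set


/-- weight integrability -/
lemma aux_w_int (c : ℝ) (hc : -1 < c) :
    IntegrableOn (fun x : ℝ => Real.exp (-x) * x ^ c) (Set.Ioi (0:ℝ)) := by
  have := Real.GammaIntegral_convergent (s := c + 1) (by linarith)
  simpa using this

/-- pointwise split bound -/
lemma aux_pt (c a b : ℝ) (hc : c = a + b) (ha : a ≤ 0) (hb : b ≤ 0) {s x : ℝ}
    (hs : 0 < s) (hx : 0 < x) : (s + x) ^ c ≤ s ^ a * x ^ b := by
  rw [hc, Real.rpow_add (by linarith)]
  exact mul_le_mul (Real.rpow_le_rpow_of_nonpos hs (by linarith) ha)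
    (Real.rpow_le_rpow_of_nonpos hx (by linarith) hb)
    (Real.rpow_nonneg (by linarith) b) (Real.rpow_nonneg hs.le a)

/-- key inner-integral bound: `∫ (s+x)^c x^β e^{-x} ≤ Γ(ε) s^a` when `c = a + (ε-β-1)`. -/
lemma aux_inner (β ε a c : ℝ) (hβ : 0 < β) (hε : 0 < ε) (hεβ : ε ≤ β + 1) (ha : a ≤ 0)
    (hc : c = a + (ε - β - 1)) {s : ℝ} (hs : 0 < s) :
    (∫ x in Set.Ioi (0:ℝ), (s + x) ^ c * (x ^ β * Real.exp (-x)))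
      ≤ Real.Gamma ε * s ^ a := by
  have hGint : IntegrableOn (fun x : ℝ => Real.exp (-x) * x ^ (ε - 1)) (Set.Ioi (0:ℝ)) :=
    aux_w_int _ (by linarith)
  have hbound : ∀ x ∈ Set.Ioi (0:ℝ),
      (s + x) ^ c * (x ^ β * Real.exp (-x)) ≤ s ^ a * (Real.exp (-x) * x ^ (ε - 1)) := by
    intro x hx
    rw [Set.mem_Ioi] at hx
    have h1 : (s + x) ^ c ≤ s ^ a * x ^ (ε - β - 1) :=
      aux_pt c a (ε - β - 1) hc ha (by linarith) hs hx
    have h2 : (s + x) ^ c * (x ^ β * Real.exp (-x))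
        ≤ (s ^ a * x ^ (ε - β - 1)) * (x ^ β * Real.exp (-x)) :=
      mul_le_mul_of_nonneg_right h1 (by positivity)
    refine h2.trans_eq ?_
    rw [show ε - 1 = (ε - β - 1) + β by ring, Real.rpow_add hx]
    ring
  have hmeas : Measurable (fun x : ℝ => (s + x) ^ c * (x ^ β * Real.exp (-x))) := by fun_prop
  have hint : IntegrableOn (fun x : ℝ => (s + x) ^ c * (x ^ β * Real.exp (-x)))
      (Set.Ioi (0:ℝ)) := by
    refine Integrable.mono' (hGint.const_mul (s ^ a)) hmeas.aestronglyMeasurable ?_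
    filter_upwards [ae_restrict_mem measurableSet_Ioi] with x hx
    rw [Set.mem_Ioi] at hx
    rw [Real.norm_eq_abs, abs_of_nonneg (by positivity)]
    exact hbound x hx
  calc (∫ x in Set.Ioi (0:ℝ), (s + x) ^ c * (x ^ β * Real.exp (-x)))
      ≤ ∫ x in Set.Ioi (0:ℝ), s ^ a * (Real.exp (-x) * x ^ (ε - 1)) :=
        setIntegral_mono_on hint (hGint.const_mul _) measurableSet_Ioi hbound
    _ = Real.Gamma ε * s ^ a := by
        rw [integral_const_mul, ← Real.Gamma_eq_integral hε, mul_comm]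

/-- (u+v)^p ≤ 2^p (u^p + v^p) for nonneg -/
lemma aux_add_rpow (u v p : ℝ) (hu : 0 ≤ u) (hv : 0 ≤ v) (hp : 0 ≤ p) :
    (u + v) ^ p ≤ 2 ^ p * (u ^ p + v ^ p) := by
  have h1 : u + v ≤ 2 * max u v := by
    rcases le_total u v with h | h
    · simp [max_eq_right h]; linarith
    · simp [max_eq_left h]; linarith
  have h2 : (u + v) ^ p ≤ (2 * max u v) ^ p :=
    Real.rpow_le_rpow (by linarith) h1 hp
  refine h2.trans ?_
  rw [Real.mul_rpow (by norm_num) (le_max_iff.2 (Or.inl hu))]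
  gcongr
  rcases le_total u v with h | h
  · rw [max_eq_right h]; nlinarith [Real.rpow_nonneg hu p]
  · rw [max_eq_left h]; nlinarith [Real.rpow_nonneg hv p]

/-- measurability of the parametric integral -/
lemma aux_meas (f : ℝ × ℝ → ℝ) (hf : Measurable f) :
    Measurable (fun s : ℝ => ∫ x in Set.Ioi (0:ℝ), f (s, x)) :=
  (hf.stronglyMeasurable.integral_prod_right').measurable

/-- integral of rpow over Ioc -/
lemma aux_int_rpow {r T' : ℝ} (hr : -1 < r) (hT' : 0 < T') :
    ∫ s in Set.Ioc (0:ℝ) T', s ^ r = T' ^ (r + 1) / (r + 1) := by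
  rw [← intervalIntegral.integral_of_le hT'.le, integral_rpow (Or.inl hr),
    Real.zero_rpow (by linarith), sub_zero]

/-- part-2 core computation -/
lemma aux_main2 (β ε a c q : ℝ) (hβ : 0 < β) (hε : 0 < ε) (hεβ : ε ≤ β + 1) (ha : a ≤ 0)
    (hc : c = a + (ε - β - 1)) (hq : 0 ≤ q) (hr : -1 < q * a / 2) {T' : ℝ} (hT' : 0 < T') :
    (∫ s in Set.Ioc (0:ℝ) T',
        (∫ x in Set.Ioi (0:ℝ), (s + x) ^ c * (x ^ β * Real.exp (-x))) ^ (q/2))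
      ≤ (Real.Gamma ε) ^ (q/2) / (q * a / 2 + 1) * T' ^ (q * a / 2 + 1) := by
  set r := q * a / 2 with hrdef
  set G := (Real.Gamma ε) ^ (q/2) with hGdef
  have hGpos : 0 < Real.Gamma ε := Real.Gamma_pos_of_pos hε
  set f := fun s : ℝ => ∫ x in Set.Ioi (0:ℝ), (s + x) ^ c * (x ^ β * Real.exp (-x)) with hfdef
  have hfnn : ∀ s, 0 < s → 0 ≤ f s := by
    intro s hs
    apply setIntegral_nonneg measurableSet_Ioi
    intro x hx
    rw [Set.mem_Ioi] at hx
    positivity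
  have hbound : ∀ s ∈ Set.Ioc (0:ℝ) T', f s ^ (q/2) ≤ G * s ^ r := by
    intro s hs
    have hs0 : 0 < s := hs.1
    have h1 : f s ≤ Real.Gamma ε * s ^ a := aux_inner β ε a c hβ hε hεβ ha hc hs0
    have h2 : f s ^ (q/2) ≤ (Real.Gamma ε * s ^ a) ^ (q/2) :=
      Real.rpow_le_rpow (hfnn s hs0) h1 (by linarith)
    refine h2.trans_eq ?_
    rw [Real.mul_rpow hGpos.le (Real.rpow_nonneg hs0.le a), ← Real.rpow_mul hs0.le]
    congr 1
    rw [hrdef]; congr 1; ring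
  have hg_int : IntegrableOn (fun s : ℝ => G * s ^ r) (Set.Ioc (0:ℝ) T') :=
    ((intervalIntegral.intervalIntegrable_rpow' hr).1).const_mul G
  have hfmeas : Measurable f :=
    aux_meas (fun p => (p.1 + p.2) ^ c * (p.2 ^ β * Real.exp (-p.2))) (by fun_prop)
  have hF_int : IntegrableOn (fun s : ℝ => f s ^ (q/2)) (Set.Ioc (0:ℝ) T') := by
    refine Integrable.mono' hg_int (hfmeas.pow_const _).aestronglyMeasurable ?_
    · filter_upwards [ae_restrict_mem measurableSet_Ioc] with s hs
      rw [Real.norm_eq_abs, abs_of_nonneg (Real.rpow_nonneg (hfnn s hs.1) _)]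
      exact hbound s hs
  calc (∫ s in Set.Ioc (0:ℝ) T', f s ^ (q/2))
      ≤ ∫ s in Set.Ioc (0:ℝ) T', G * s ^ r :=
        setIntegral_mono_on hF_int hg_int measurableSet_Ioc hbound
    _ = G * (T' ^ (r + 1) / (r + 1)) := by rw [integral_const_mul, aux_int_rpow hr hT']
    _ = G / (r + 1) * T' ^ (r + 1) := by ring

/-- for the power-law kernel `K(t) = t^{H−1/2}`, `H ∈ (0,1/2)`, and weight
`w(x) = x^β e^{−x}`, `β ∈ (1−2H,1)`: for every `q < 2/(2−2H−β)` (which exceeds `2`) and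
every `T > 0`, `∫₀^T ‖K(s+·)‖_{H¹_w}^q ds < ∞`; in particular, for every small `ε > 0`
(with `q(2−2H−β+ε) < 2`) there is a constant `C > 0` such that
`∫₀^T (∫₀^∞ (s+x)^{2H−3} x^β e^{−x} dx)^{q/2} ds ≤ C T^{q(2H−ε+β−2)/2+1}` with a
nonnegative exponent. -/
theorem stmt7 (H β q T : ℝ)
    (hH : H ∈ Set.Ioo (0:ℝ) (1/2)) (hβ : β ∈ Set.Ioo (1 - 2*H) 1)
    (hq2 : 2 < q) (hq : q < 2 / (2 - 2*H - β)) (hT : 0 < T) :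
    IntegrableOn (fun s =>
        (Real.sqrt ((∫ x in Set.Ioi (0:ℝ), ((s + x) ^ (H - 1/2)) ^ 2 * (x ^ β * Real.exp (-x)))
          + ∫ x in Set.Ioi (0:ℝ),
              ((H - 1/2) * (s + x) ^ (H - 3/2)) ^ 2 * (x ^ β * Real.exp (-x)))) ^ q)
      (Set.Ioc 0 T) ∧
    (∀ ε : ℝ, 0 < ε → q * (2 - 2*H - β + ε) < 2 →
      ∃ C : ℝ, 0 < C ∧ 0 ≤ q * (2*H - ε + β - 2) / 2 + 1 ∧
        ∀ T' : ℝ, 0 < T' →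
          (∫ s in Set.Ioc (0:ℝ) T',
              (∫ x in Set.Ioi (0:ℝ), ((s + x) ^ (2*H - 3)) * (x ^ β * Real.exp (-x))) ^ (q/2))
            ≤ C * T' ^ (q * (2*H - ε + β - 2) / 2 + 1)) := by
  obtain ⟨hH0, hH2⟩ := hH
  obtain ⟨hβ1, hβ2⟩ := hβ
  have hβ0 : 0 < β := by linarith
  have hd : 0 < 2 - 2*H - β := by linarith
  have hq0 : 0 < q := by linarith
  have hqd : q * (2 - 2*H - β) < 2 := by
    rw [lt_div_iff₀ hd] at hq; linarith [hq]
  constructor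
  · -- Part 1
    set ε₀ : ℝ := (2/q - (2 - 2*H - β)) / 2 with hε₀def
    have h2q : 2 - 2*H - β < 2/q := by
      rw [lt_div_iff₀ hq0]; linarith [hqd]
    have hε₀ : 0 < ε₀ := by
      rw [hε₀def]; linarith
    have hqε₀ : q * (2 - 2*H - β + ε₀) < 2 := by
      have : 2 - 2*H - β + ε₀ = ((2 - 2*H - β) + 2/q) / 2 := by rw [hε₀def]; ring
      rw [this]
      have h2 : q * (2/q) = 2 := by field_simp
      nlinarith [h2q, hq0]
    have hεsmall : ε₀ < 2*H + β - 1 := by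
      nlinarith [hqε₀, hq2, hd, hε₀]
    have hεβ : ε₀ ≤ β + 1 := by linarith
    set a : ℝ := 2*H - ε₀ + β - 2 with hadef
    have ha : a ≤ 0 := by rw [hadef]; linarith
    have hr : -1 < q * a / 2 := by
      have : q * a = -(q * (2 - 2*H - β + ε₀)) := by rw [hadef]; ring
      rw [this]; linarith [hqε₀]
    set r : ℝ := q * a / 2 with hrdef
    set C1 : ℝ := Real.Gamma (2*H + β) with hC1def
    set C2 : ℝ := (H - 1/2)^2 * Real.Gamma ε₀ with hC2def
    have hC1pos : 0 < C1 := Real.Gamma_pos_of_pos (by linarith)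
    have hC2nn : 0 ≤ C2 := by positivity
    set I1 := fun s : ℝ => ∫ x in Set.Ioi (0:ℝ),
        ((s + x) ^ (H - 1/2)) ^ 2 * (x ^ β * Real.exp (-x)) with hI1def
    set I2 := fun s : ℝ => ∫ x in Set.Ioi (0:ℝ),
        ((H - 1/2) * (s + x) ^ (H - 3/2)) ^ 2 * (x ^ β * Real.exp (-x)) with hI2def
    have hI1nn : ∀ s : ℝ, 0 ≤ I1 s := by
      intro s
      apply setIntegral_nonneg measurableSet_Ioi
      intro x hx
      rw [Set.mem_Ioi] at hx
      positivity
    have hI2nn : ∀ s : ℝ, 0 ≤ I2 s := by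
      intro s
      apply setIntegral_nonneg measurableSet_Ioi
      intro x hx
      rw [Set.mem_Ioi] at hx
      positivity
    -- bound on I1
    have hI1le : ∀ s : ℝ, 0 < s → I1 s ≤ C1 := by
      intro s hs
      have hGint : IntegrableOn (fun x : ℝ => Real.exp (-x) * x ^ (2*H + β - 1))
          (Set.Ioi (0:ℝ)) := aux_w_int _ (by linarith)
      have hbd : ∀ x ∈ Set.Ioi (0:ℝ),
          ((s + x) ^ (H - 1/2)) ^ 2 * (x ^ β * Real.exp (-x))
            ≤ Real.exp (-x) * x ^ (2*H + β - 1) := by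
        intro x hx
        rw [Set.mem_Ioi] at hx
        have hsx : (0:ℝ) < s + x := by linarith
        have e1 : ((s + x) ^ (H - 1/2)) ^ 2 = (s + x) ^ (2*H - 1) := by
          rw [sq, ← Real.rpow_add hsx]; congr 1; ring
        have e2 : (s + x) ^ (2*H - 1) ≤ x ^ (2*H - 1) :=
          Real.rpow_le_rpow_of_nonpos hx (by linarith) (by linarith)
        calc ((s + x) ^ (H - 1/2)) ^ 2 * (x ^ β * Real.exp (-x))
            ≤ x ^ (2*H - 1) * (x ^ β * Real.exp (-x)) := by
              rw [e1]; exact mul_le_mul_of_nonneg_right e2 (by positivity)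
          _ = Real.exp (-x) * x ^ (2*H + β - 1) := by
              rw [show 2*H + β - 1 = (2*H - 1) + β by ring, Real.rpow_add hx]; ring
      have hint : IntegrableOn
          (fun x : ℝ => ((s + x) ^ (H - 1/2)) ^ 2 * (x ^ β * Real.exp (-x)))
          (Set.Ioi (0:ℝ)) := by
        refine Integrable.mono' hGint
          (Measurable.aestronglyMeasurable (by fun_prop)) ?_
        filter_upwards [ae_restrict_mem measurableSet_Ioi] with x hx
        rw [Set.mem_Ioi] at hx
        rw [Real.norm_eq_abs, abs_of_nonneg (by positivity)]
        exact hbd x hx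
      calc I1 s ≤ ∫ x in Set.Ioi (0:ℝ), Real.exp (-x) * x ^ (2*H + β - 1) :=
            setIntegral_mono_on hint hGint measurableSet_Ioi hbd
        _ = C1 := (Real.Gamma_eq_integral (by linarith : (0:ℝ) < 2*H + β)).symm
    -- bound on I2
    have hI2le : ∀ s : ℝ, 0 < s → I2 s ≤ C2 * s ^ a := by
      intro s hs
      have heq : I2 s = (H - 1/2)^2 *
          ∫ x in Set.Ioi (0:ℝ), (s + x) ^ (2*H - 3) * (x ^ β * Real.exp (-x)) := by
        rw [hI2def, ← integral_const_mul]
        refine setIntegral_congr_fun measurableSet_Ioi fun x hx => ?_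
        rw [Set.mem_Ioi] at hx
        have hsx : (0:ℝ) < s + x := by linarith
        rw [mul_pow, sq ((s + x) ^ (H - 3/2)), ← Real.rpow_add hsx]
        rw [show H - 3/2 + (H - 3/2) = 2*H - 3 by ring]
        ring
      rw [heq, hC2def, mul_assoc]
      refine mul_le_mul_of_nonneg_left ?_ (by positivity)
      exact aux_inner β ε₀ a (2*H - 3) hβ0 hε₀ hεβ ha (by rw [hadef]; ring) hs
    -- the dominating function
    set g := fun s : ℝ => (2:ℝ) ^ (q/2) * (C1 ^ (q/2) + C2 ^ (q/2) * s ^ r) with hgdef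
    have hg_int : IntegrableOn g (Set.Ioc (0:ℝ) T) := by
      refine Integrable.const_mul ?_ _
      refine Integrable.add ?_ ?_
      · exact integrableOn_const measure_Ioc_lt_top.ne
      · exact ((intervalIntegral.intervalIntegrable_rpow' hr).1).const_mul _
    have hm1 : Measurable I1 :=
      aux_meas (fun p => ((p.1 + p.2) ^ (H - 1/2)) ^ 2 * (p.2 ^ β * Real.exp (-p.2)))
        (by fun_prop)
    have hm2 : Measurable I2 :=
      aux_meas (fun p => ((H - 1/2) * (p.1 + p.2) ^ (H - 3/2)) ^ 2 *
        (p.2 ^ β * Real.exp (-p.2))) (by fun_prop)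
    have hFmeas : Measurable (fun s : ℝ => Real.sqrt (I1 s + I2 s) ^ q) := by fun_prop
    have hFbd : ∀ s ∈ Set.Ioc (0:ℝ) T, Real.sqrt (I1 s + I2 s) ^ q ≤ g s := by
      intro s hs
      have hs0 : 0 < s := hs.1
      have hv : 0 ≤ I1 s + I2 s := add_nonneg (hI1nn s) (hI2nn s)
      have e1 : Real.sqrt (I1 s + I2 s) ^ q = (I1 s + I2 s) ^ (q/2) := by
        rw [Real.sqrt_eq_rpow, ← Real.rpow_mul hv]; congr 1; ring
      rw [e1]
      have h2 : (I1 s + I2 s) ^ (q/2) ≤ (C1 + C2 * s ^ a) ^ (q/2) :=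
        Real.rpow_le_rpow hv (add_le_add (hI1le s hs0) (hI2le s hs0)) (by linarith)
      refine h2.trans ?_
      have h3 := aux_add_rpow C1 (C2 * s ^ a) (q/2) hC1pos.le
        (mul_nonneg hC2nn (Real.rpow_nonneg hs0.le a)) (by linarith)
      refine h3.trans_eq ?_
      rw [hgdef]
      congr 2
      rw [Real.mul_rpow hC2nn (Real.rpow_nonneg hs0.le a), ← Real.rpow_mul hs0.le]
      congr 2
      rw [hrdef]; ring
    refine Integrable.mono' hg_int hFmeas.aestronglyMeasurable ?_
    filter_upwards [ae_restrict_mem measurableSet_Ioc] with s hs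
    rw [Real.norm_eq_abs, abs_of_nonneg (Real.rpow_nonneg (Real.sqrt_nonneg _) q)]
    exact hFbd s hs
  · -- Part 2
    intro ε hε hqε
    have h1 : 2 - 2*H - β + ε < 1 := by nlinarith [hqε, hq2, hd, hε]
    have hεβ : ε ≤ β + 1 := by linarith
    set a : ℝ := 2*H - ε + β - 2 with hadef
    have ha : a ≤ 0 := by rw [hadef]; linarith
    have hr : -1 < q * a / 2 := by
      have : q * a = -(q * (2 - 2*H - β + ε)) := by rw [hadef]; ring
      rw [this]; linarith [hqε]
    refine ⟨(Real.Gamma ε) ^ (q/2) / (q * a / 2 + 1), ?_, by linarith, ?_⟩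
    · exact div_pos (Real.rpow_pos_of_pos (Real.Gamma_pos_of_pos hε) _) (by linarith)
    · intro T' hT'
      have := aux_main2 β ε a (2*H - 3) q hβ0 hε hεβ ha (by rw [hadef]; ring)
        (by linarith) hr hT'
      exact this
end

section
/- Let H ∈ (0,1/2), K(t) = t^{H−1/2}, w(x) = x^β e^{−x} with β ∈ (1−2H, 1). Then for every t, h > 0, ∫₀^t ∫₀^∞ K''(s+h+x)² w(x) dx ds ≤ C h^{β+2H−3} for a constant C independent of t, h, where the exponent satisfies β+2H−3 > −2. Consequently h ↦ (∫₀^t |∂_x² S(s+h)K|²_{L²_w} ds)^{1/2} is integrable near h = 0. -/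
open MeasureTheory Set

lemma auxB {c β : ℝ} (hc : c ≤ 0) (hβ : -1 < β) (hcb : β + c < -1) :
    IntegrableOn (fun y : ℝ => (1+y)^c * y^β) (Ioi (0:ℝ)) := by
  have hmeas : AEStronglyMeasurable (fun y : ℝ => (1+y)^c * y^β) volume := by
    apply Measurable.aestronglyMeasurable
    exact ((measurable_const.add measurable_id).pow measurable_const).mul
      (measurable_id.pow measurable_const)
  have h1 : IntegrableOn (fun y : ℝ => (1+y)^c * y^β) (Ioc (0:ℝ) 1) := by
    have hint : IntegrableOn (fun y : ℝ => y ^ β) (Ioc (0:ℝ) 1) := by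
      rw [← intervalIntegrable_iff_integrableOn_Ioc_of_le zero_le_one]
      exact intervalIntegral.intervalIntegrable_rpow' hβ
    refine Integrable.mono hint hmeas.restrict ?_
    filter_upwards [ae_restrict_mem measurableSet_Ioc] with y hy
    have hy0 : 0 < y := hy.1
    rw [Real.norm_of_nonneg (mul_nonneg (Real.rpow_nonneg (by linarith) _)
      (Real.rpow_nonneg hy0.le _)), Real.norm_of_nonneg (Real.rpow_nonneg hy0.le _)]
    calc (1+y)^c * y^β ≤ 1 * y^β :=
          mul_le_mul_of_nonneg_right
            (Real.rpow_le_one_of_one_le_of_nonpos (by linarith) hc)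
            (Real.rpow_nonneg hy0.le _)
      _ = y^β := one_mul _
  have h2 : IntegrableOn (fun y : ℝ => (1+y)^c * y^β) (Ioi (1:ℝ)) := by
    have hint : IntegrableOn (fun y : ℝ => y ^ (β+c)) (Ioi (1:ℝ)) :=
      integrableOn_Ioi_rpow_of_lt hcb zero_lt_one
    refine Integrable.mono hint hmeas.restrict ?_
    filter_upwards [ae_restrict_mem measurableSet_Ioi] with y hy
    have hy0 : (0:ℝ) < y := lt_trans zero_lt_one hy
    rw [Real.norm_of_nonneg (mul_nonneg (Real.rpow_nonneg (by linarith) _)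
      (Real.rpow_nonneg hy0.le _)), Real.norm_of_nonneg (Real.rpow_nonneg hy0.le _),
      Real.rpow_add hy0, mul_comm (y^β)]
    exact mul_le_mul_of_nonneg_right
      (Real.rpow_le_rpow_of_nonpos hy0 (by linarith) hc) (Real.rpow_nonneg hy0.le _)
  have := h1.union h2
  rwa [Ioc_union_Ioi_eq_Ioi zero_le_one] at this

lemma auxSubstInt {c β : ℝ} (hc : c ≤ 0) (hβ : -1 < β) (hcb : β + c < -1) {u : ℝ} (hu : 0 < u) :
    IntegrableOn (fun x : ℝ => (u+x)^c * x^β) (Ioi (0:ℝ)) := by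
  have h := integrableOn_Ioi_comp_mul_left_iff (fun x : ℝ => (u+x)^c * x^β) 0 hu
  rw [mul_zero] at h
  rw [← h]
  refine IntegrableOn.congr_fun (((auxB hc hβ hcb).const_mul (u^c*u^β))) ?_ measurableSet_Ioi
  intro y hy
  have hy0 : (0:ℝ) < y := hy
  simp only
  rw [show u + u*y = u*(1+y) by ring, Real.mul_rpow hu.le (by linarith),
    Real.mul_rpow hu.le hy0.le]
  ring

lemma auxSubstVal {c β : ℝ} (hc : c ≤ 0) (hβ : -1 < β) (hcb : β + c < -1) {u : ℝ} (hu : 0 < u) :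
    ∫ x in Ioi (0:ℝ), (u+x)^c * x^β =
      u^(c+β+1) * ∫ y in Ioi (0:ℝ), (1+y)^c * y^β := by
  have h := integral_comp_mul_left_Ioi (fun x : ℝ => (u+x)^c * x^β) 0 hu
  rw [mul_zero] at h
  have heq : (∫ y in Ioi (0:ℝ), (u+u*y)^c * (u*y)^β)
      = (u^c*u^β) * ∫ y in Ioi (0:ℝ), (1+y)^c * y^β := by
    rw [← integral_const_mul]
    refine setIntegral_congr_fun measurableSet_Ioi ?_
    intro y hy
    have hy0 : (0:ℝ) < y := hy
    simp only
    rw [show u + u*y = u*(1+y) by ring, Real.mul_rpow hu.le (by linarith),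
      Real.mul_rpow hu.le hy0.le]
    ring
  rw [heq, smul_eq_mul] at h
  have h' : ∫ x in Ioi (0:ℝ), (u+x)^c * x^β
      = u * ((u^c*u^β) * ∫ y in Ioi (0:ℝ), (1+y)^c * y^β) := by
    rw [h]; field_simp
  rw [h', show c+β+1 = c+(β+1) by ring, Real.rpow_add hu, Real.rpow_add hu, Real.rpow_one]
  ring

lemma auxInner {c β : ℝ} (hc : c ≤ 0) (hβ : -1 < β) (hcb : β + c < -1) {u : ℝ} (hu : 0 < u) :
    ∫ x in Ioi (0:ℝ), (u+x)^c * (x^β * Real.exp (-x)) ≤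
      u^(c+β+1) * ∫ y in Ioi (0:ℝ), (1+y)^c * y^β := by
  rw [← auxSubstVal hc hβ hcb hu]
  refine integral_mono_of_nonneg ?_ (auxSubstInt hc hβ hcb hu) ?_
  · filter_upwards [ae_restrict_mem measurableSet_Ioi] with x hx
    have hx0 : (0:ℝ) < x := hx
    have h0 : (0:ℝ) ≤ u + x := by linarith
    exact mul_nonneg (Real.rpow_nonneg h0 _) (by positivity)
  · filter_upwards [ae_restrict_mem measurableSet_Ioi] with x hx
    have hx0 : (0:ℝ) < x := hx
    have h0 : (0:ℝ) ≤ u + x := by linarith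
    refine mul_le_mul_of_nonneg_left ?_ (Real.rpow_nonneg h0 _)
    exact mul_le_of_le_one_right (Real.rpow_nonneg hx0.le _)
      (Real.exp_le_one_iff.mpr (by linarith))


/-- for the power-law kernel `K(t) = t^{H−1/2}`, `H ∈ (0,1/2)`, and weight
`w(x) = x^β e^{−x}`, `β ∈ (1−2H,1)`: the exponent satisfies `β+2H−3 > −2`, and there is
`C > 0` (independent of `t, h`) with
`∫₀^t ∫₀^∞ K''(s+h+x)² w(x) dx ds ≤ C h^{β+2H−3}` for all `t, h > 0`, where
`K''(u) = (H−1/2)(H−3/2) u^{H−5/2}`. Consequently, for every `t > 0`, the map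
`h ↦ (∫₀^t ‖∂_x² S(s+h)K‖²_{L²_w} ds)^{1/2}` is integrable near `h = 0`. -/
theorem stmt8 (H β : ℝ) (hH : H ∈ Set.Ioo (0:ℝ) (1/2)) (hβ : β ∈ Set.Ioo (1 - 2*H) 1) :
    (-2 < β + 2*H - 3) ∧
    (∃ C : ℝ, 0 < C ∧ ∀ t : ℝ, 0 < t → ∀ h : ℝ, 0 < h →
      (∫ s in Set.Ioc (0:ℝ) t, ∫ x in Set.Ioi (0:ℝ),
          ((H - 1/2) * (H - 3/2) * (s + h + x) ^ (H - 5/2)) ^ 2 * (x ^ β * Real.exp (-x)))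
        ≤ C * h ^ (β + 2*H - 3)) ∧
    (∀ t : ℝ, 0 < t →
      IntegrableOn (fun h => Real.sqrt
          (∫ s in Set.Ioc (0:ℝ) t, ∫ x in Set.Ioi (0:ℝ),
            ((H - 1/2) * (H - 3/2) * (s + h + x) ^ (H - 5/2)) ^ 2 * (x ^ β * Real.exp (-x))))
        (Set.Ioc 0 1)) := by
  obtain ⟨hH0, hH2⟩ := hH
  obtain ⟨hβ1, hβ2⟩ := hβ
  have hq : -2 < β + 2*H - 3 := by linarith
  -- abbreviations
  set c : ℝ := 2*H - 5 with hc_def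
  have hc : c ≤ 0 := by rw [hc_def]; linarith
  have hβ1' : -1 < β := by linarith
  have hcb : β + c < -1 := by rw [hc_def]; linarith
  set B : ℝ := ∫ y in Ioi (0:ℝ), (1+y)^c * y^β with hB_def
  have hB : 0 ≤ B := by
    rw [hB_def]
    refine setIntegral_nonneg measurableSet_Ioi fun y hy => ?_
    have : (0:ℝ) < y := hy
    exact mul_nonneg (Real.rpow_nonneg (by linarith) _) (Real.rpow_nonneg this.le _)
  set A : ℝ := ((H - 1/2) * (H - 3/2))^2 with hA_def
  have hA : 0 ≤ A := sq_nonneg _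
  set a : ℝ := β + 2*H - 4 with ha_def
  have ha : a < -1 := by rw [ha_def]; linarith
  -- inner integral rewrite
  have hinner_eq : ∀ u : ℝ, 0 < u →
      (∫ x in Ioi (0:ℝ), ((H - 1/2) * (H - 3/2) * (u + x) ^ (H - 5/2)) ^ 2
        * (x ^ β * Real.exp (-x)))
      = A * ∫ x in Ioi (0:ℝ), (u+x)^c * (x ^ β * Real.exp (-x)) := by
    intro u hu
    rw [← integral_const_mul]
    refine setIntegral_congr_fun measurableSet_Ioi fun x hx => ?_
    have hx0 : (0:ℝ) < x := hx
    have hux : (0:ℝ) ≤ u + x := by linarith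
    rw [mul_pow, hA_def, ← Real.rpow_natCast ((u+x)^(H-5/2)) 2, ← Real.rpow_mul hux,
      show (H-5/2)*((2:ℕ):ℝ) = c by rw [hc_def]; push_cast; ring]
    ring
  -- inner integral nonneg (for every s)
  have hinner_nonneg : ∀ s h : ℝ,
      0 ≤ ∫ x in Ioi (0:ℝ), ((H - 1/2) * (H - 3/2) * (s + h + x) ^ (H - 5/2)) ^ 2
        * (x ^ β * Real.exp (-x)) := by
    intro s h
    refine setIntegral_nonneg measurableSet_Ioi fun x hx => ?_
    have hx0 : (0:ℝ) < x := hx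
    exact mul_nonneg (sq_nonneg _)
      (mul_nonneg (Real.rpow_nonneg hx0.le _) (Real.exp_nonneg _))
  -- the key quantitative bound
  set C : ℝ := (A*B + 1) / (3 - 2*H - β) with hC_def
  have hden : 0 < 3 - 2*H - β := by linarith
  have hC : 0 < C := by
    rw [hC_def]
    exact div_pos (by nlinarith) hden
  have key : ∀ t : ℝ, 0 < t → ∀ h : ℝ, 0 < h →
      (∫ s in Set.Ioc (0:ℝ) t, ∫ x in Set.Ioi (0:ℝ),
          ((H - 1/2) * (H - 3/2) * (s + h + x) ^ (H - 5/2)) ^ 2 * (x ^ β * Real.exp (-x)))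
        ≤ C * h ^ (β + 2*H - 3) := by
    intro t ht h hpos
    have step1 : (∫ s in Set.Ioc (0:ℝ) t, ∫ x in Set.Ioi (0:ℝ),
          ((H - 1/2) * (H - 3/2) * (s + h + x) ^ (H - 5/2)) ^ 2 * (x ^ β * Real.exp (-x)))
        ≤ ∫ s in Set.Ioc (0:ℝ) t, (A*B) * (s+h)^a := by
      refine integral_mono_of_nonneg ?_ ?_ ?_
      · filter_upwards with s using hinner_nonneg s h
      · refine (ContinuousOn.integrableOn_Icc ?_).mono_set Ioc_subset_Icc_self
        refine continuousOn_const.mul (ContinuousOn.rpow_const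
          ((continuous_id.add continuous_const).continuousOn)
          (fun s hs => Or.inl ?_))
        have h1 := hs.1
        exact ne_of_gt (by linarith)
      · filter_upwards [ae_restrict_mem measurableSet_Ioc] with s hs
        have hsh : (0:ℝ) < s + h := by have := hs.1; linarith
        rw [hinner_eq (s+h) hsh]
        calc A * ∫ x in Ioi (0:ℝ), (s+h+x)^c * (x ^ β * Real.exp (-x))
            ≤ A * ((s+h)^(c+β+1) * B) :=
              mul_le_mul_of_nonneg_left (auxInner hc hβ1' hcb hsh) hA
          _ = (A*B) * (s+h)^a := by rw [show c+β+1 = a by rw [hc_def, ha_def]; ring]; ring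
    have step2 : (∫ s in Set.Ioc (0:ℝ) t, (A*B) * (s+h)^a)
        = (A*B) * ∫ s in Set.Ioc (0:ℝ) t, (s+h)^a := integral_const_mul _ _
    have step3 : (∫ s in Set.Ioc (0:ℝ) t, (s+h)^a) ≤ -h^(a+1)/(a+1) := by
      have e1 : (∫ s in Set.Ioc (0:ℝ) t, (s+h)^a) = ∫ u in Set.Ioc h (t+h), u^a := by
        rw [← intervalIntegral.integral_of_le ht.le,
          ← intervalIntegral.integral_of_le (by linarith : h ≤ t+h)]
        simpa using intervalIntegral.integral_comp_add_right (a := 0) (b := t) (fun u : ℝ => u^a) h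
      rw [e1, ← integral_Ioi_rpow_of_lt ha hpos]
      refine setIntegral_mono_set (integrableOn_Ioi_rpow_of_lt ha hpos) ?_
        (HasSubset.Subset.eventuallyLE Ioc_subset_Ioi_self)
      filter_upwards [ae_restrict_mem measurableSet_Ioi] with u hu
      have : (0:ℝ) < u := hpos.trans hu
      exact Real.rpow_nonneg this.le _
    have hq1 : a + 1 = β + 2*H - 3 := by rw [ha_def]; ring
    have hrw : -h^(a+1)/(a+1) = h^(β + 2*H - 3) * (1/(3-2*H-β)) := by
      have hne : β + 2*H - 3 ≠ 0 := by linarith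
      rw [hq1, show 3 - 2*H - β = -(β + 2*H - 3) by ring, mul_one_div, div_neg, neg_div]
    calc (∫ s in Set.Ioc (0:ℝ) t, ∫ x in Set.Ioi (0:ℝ),
          ((H - 1/2) * (H - 3/2) * (s + h + x) ^ (H - 5/2)) ^ 2 * (x ^ β * Real.exp (-x)))
        ≤ (A*B) * ∫ s in Set.Ioc (0:ℝ) t, (s+h)^a := step2 ▸ step1
      _ ≤ (A*B) * (-h^(a+1)/(a+1)) := by
          refine mul_le_mul_of_nonneg_left step3 (mul_nonneg hA hB)
      _ = (A*B) * (h^(β + 2*H - 3) * (1/(3-2*H-β))) := by rw [hrw]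
      _ ≤ (A*B+1) * (h^(β + 2*H - 3) * (1/(3-2*H-β))) := by
          exact mul_le_mul_of_nonneg_right (by linarith)
            (mul_nonneg (Real.rpow_nonneg hpos.le _) (one_div_nonneg.mpr hden.le))
      _ = C * h ^ (β + 2*H - 3) := by rw [hC_def]; ring
  refine ⟨hq, ⟨C, hC, key⟩, ?_⟩
  -- integrability of the sqrt near 0
  intro t ht
  have hmeasG : StronglyMeasurable (fun h : ℝ => ∫ s in Set.Ioc (0:ℝ) t, ∫ x in Set.Ioi (0:ℝ),
      ((H - 1/2) * (H - 3/2) * (s + h + x) ^ (H - 5/2)) ^ 2 * (x ^ β * Real.exp (-x))) := by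
    have hψ : StronglyMeasurable (fun p : (ℝ × ℝ) × ℝ =>
        ((H - 1/2) * (H - 3/2) * (p.1.2 + p.1.1 + p.2) ^ (H - 5/2)) ^ 2
          * (p.2 ^ β * Real.exp (-p.2))) := by
      apply Measurable.stronglyMeasurable
      have m1 : Measurable fun p : (ℝ × ℝ) × ℝ => p.1.2 + p.1.1 + p.2 :=
        (measurable_fst.snd.add measurable_fst.fst).add measurable_snd
      exact ((measurable_const.mul (m1.pow measurable_const)).pow_const 2).mul
        ((measurable_snd.pow measurable_const).mul measurable_snd.neg.exp)
    have hΦ : StronglyMeasurable (fun p : ℝ × ℝ => ∫ x in Set.Ioi (0:ℝ),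
        ((H - 1/2) * (H - 3/2) * (p.2 + p.1 + x) ^ (H - 5/2)) ^ 2
          * (x ^ β * Real.exp (-x))) := hψ.integral_prod_right'
    exact hΦ.integral_prod_right'
  have hint : IntegrableOn (fun h : ℝ => Real.sqrt C * h ^ ((β + 2*H - 3)/2))
      (Set.Ioc (0:ℝ) 1) := by
    have : IntegrableOn (fun h : ℝ => h ^ ((β + 2*H - 3)/2)) (Set.Ioc (0:ℝ) 1) := by
      rw [← intervalIntegrable_iff_integrableOn_Ioc_of_le zero_le_one]
      exact intervalIntegral.intervalIntegrable_rpow' (by linarith)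
    exact this.const_mul _
  refine Integrable.mono hint
    ((Real.continuous_sqrt.comp_stronglyMeasurable hmeasG).aestronglyMeasurable.restrict) ?_
  filter_upwards [ae_restrict_mem measurableSet_Ioc] with h hh
  have hh0 : (0:ℝ) < h := hh.1
  rw [Real.norm_of_nonneg (Real.sqrt_nonneg _),
    Real.norm_of_nonneg (by positivity : (0:ℝ) ≤ Real.sqrt C * h ^ ((β + 2*H - 3)/2))]
  calc Real.sqrt (∫ s in Set.Ioc (0:ℝ) t, ∫ x in Set.Ioi (0:ℝ),
        ((H - 1/2) * (H - 3/2) * (s + h + x) ^ (H - 5/2)) ^ 2 * (x ^ β * Real.exp (-x)))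
      ≤ Real.sqrt (C * h ^ (β + 2*H - 3)) := Real.sqrt_le_sqrt (key t ht h hh0)
    _ = Real.sqrt C * h ^ ((β + 2*H - 3)/2) := by
        rw [Real.sqrt_mul hC.le, Real.sqrt_eq_rpow (h ^ (β + 2*H - 3)),
          ← Real.rpow_mul hh0.le]
        ring_nf
end

section
/- Let H ∈ (0,1/2), K(t) = t^{H−1/2}, w(x) = x^β e^{−x} with β ∈ (1−2H, 1), p > 1, and h > 0. Then for all s ≥ 0 and x > 0, |K'(s+h+x) − K'(s+x)| ≤ C h^{1−1/p} (s+x)^{H−5/2+1/p}, and consequently ∫₀^t ‖K'(·+h+s) − K'(·+s)‖²_{L²_w} ds ≤ C h^{2−2/p} Γ(β+2H−3+2/p), provided β+2H−3+2/p > 0. -/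
open MeasureTheory Set

lemma aux_mvt {γ u h : ℝ} (hγ : γ < 0) (hu : 0 < u) (hh : 0 < h) :
    u ^ γ - (u + h) ^ γ ≤ (-γ) * u ^ (γ - 1) * h := by
  have hcont : ContinuousOn (fun t : ℝ => t ^ γ) (Set.Icc u (u + h)) := by
    intro t ht
    exact (Real.continuousAt_rpow_const t γ (Or.inl (by nlinarith [ht.1] : t ≠ 0))).continuousWithinAt
  have hderiv : ∀ t ∈ Set.Ioo u (u + h), HasDerivAt (fun t : ℝ => t ^ γ) (γ * t ^ (γ - 1)) t :=
    fun t ht => Real.hasDerivAt_rpow_const (Or.inl (by nlinarith [ht.1] : t ≠ 0))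
  obtain ⟨c, hc, hceq⟩ := exists_hasDerivAt_eq_slope (fun t : ℝ => t ^ γ)
    (fun t => γ * t ^ (γ - 1)) (by linarith) hcont hderiv
  have hcpos : 0 < c := hu.trans hc.1
  have h1 : c ^ (γ - 1) ≤ u ^ (γ - 1) :=
    Real.rpow_le_rpow_of_nonpos hu hc.1.le (by linarith)
  have h2 : (u + h) ^ γ - u ^ γ = γ * c ^ (γ - 1) * h := by
    rw [hceq, show u + h - u = h by ring, div_mul_cancel₀ _ hh.ne']
  nlinarith [mul_le_mul_of_nonneg_left h1 (mul_nonneg (by linarith : (0:ℝ) ≤ -γ) hh.le)]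

lemma aux_interp {A B θ : ℝ} (hA : 0 ≤ A) (hB : 0 ≤ B) (h0 : 0 ≤ θ) (h1 : θ ≤ 1) :
    min A B ≤ A ^ θ * B ^ (1 - θ) := by
  rcases le_total A B with hab | hab
  · calc min A B = A ^ θ * A ^ (1 - θ) := by
          rw [← Real.rpow_add_of_nonneg hA h0 (by linarith)]
          simp [min_eq_left hab]
      _ ≤ A ^ θ * B ^ (1 - θ) :=
          mul_le_mul_of_nonneg_left (Real.rpow_le_rpow hA hab (by linarith)) (Real.rpow_nonneg hA θ)
  · calc min A B = B ^ θ * B ^ (1 - θ) := by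
          rw [← Real.rpow_add_of_nonneg hB h0 (by linarith)]
          simp [min_eq_right hab]
      _ ≤ A ^ θ * B ^ (1 - θ) :=
          mul_le_mul_of_nonneg_right (Real.rpow_le_rpow hB hab h0) (Real.rpow_nonneg hB _)

lemma aux_ptwise {H p : ℝ} (hH0 : 0 < H) (hH2 : H < 1/2) (hp : 1 < p)
    {h s x : ℝ} (hh : 0 < h) (hs : 0 ≤ s) (hx : 0 < x) :
    |(H - 1/2) * (s + h + x) ^ (H - 3/2) - (H - 1/2) * (s + x) ^ (H - 3/2)|
      ≤ ((1/2 - H) * (3/2 - H) ^ (1 - 1/p)) * h ^ (1 - 1/p) * (s + x) ^ (H - 5/2 + 1/p) := by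
  have hp0 : 0 < p := by linarith
  have hθ0 : 0 < 1/p := by positivity
  have hθ1 : 1/p < 1 := by rw [div_lt_one hp0]; exact hp
  set γ : ℝ := H - 3/2 with hγdef
  have hγ : γ < 0 := by simp only [hγdef]; linarith
  have hu : 0 < s + x := by linarith
  have hv : s + h + x = (s + x) + h := by ring
  set u : ℝ := s + x with hudef
  have h1 : (u + h) ^ γ ≤ u ^ γ :=
    Real.rpow_le_rpow_of_nonpos hu (by linarith) hγ.le
  have habs : |(H - 1/2) * (u + h) ^ γ - (H - 1/2) * u ^ γ|
      = (1/2 - H) * (u ^ γ - (u + h) ^ γ) := by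
    rw [← mul_sub, abs_mul, abs_of_neg (by linarith : H - 1/2 < 0),
      abs_of_nonpos (by linarith : (u + h) ^ γ - u ^ γ ≤ 0)]
    ring
  have hA : u ^ γ - (u + h) ^ γ ≤ u ^ γ := by
    have := Real.rpow_nonneg (by linarith : (0:ℝ) ≤ u + h) γ
    linarith
  have hB := aux_mvt hγ hu hh
  have hBnn : 0 ≤ (-γ) * u ^ (γ - 1) * h :=
    mul_nonneg (mul_nonneg (by linarith) (Real.rpow_nonneg hu.le _)) hh.le
  have hmin := le_min hA hB
  have hinterp := aux_interp (Real.rpow_nonneg hu.le γ) hBnn hθ0.le hθ1.le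
  have e1 : (u ^ γ) ^ (1/p) = u ^ (γ * (1/p)) := (Real.rpow_mul hu.le _ _).symm
  have e2 : ((-γ) * u ^ (γ - 1) * h) ^ (1 - 1/p)
      = (-γ) ^ (1 - 1/p) * u ^ ((γ - 1) * (1 - 1/p)) * h ^ (1 - 1/p) := by
    rw [Real.mul_rpow (mul_nonneg (by linarith) (Real.rpow_nonneg hu.le _)) hh.le,
      Real.mul_rpow (by linarith : (0:ℝ) ≤ -γ) (Real.rpow_nonneg hu.le _),
      ← Real.rpow_mul hu.le]
  have e3 : u ^ (γ * (1/p)) * u ^ ((γ - 1) * (1 - 1/p)) = u ^ (H - 5/2 + 1/p) := by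
    rw [← Real.rpow_add hu]
    congr 1
    simp only [hγdef]; ring
  have hng : -γ = 3/2 - H := by simp only [hγdef]; ring
  rw [show s + h + x = u + h by simp only [hudef]; ring]
  calc |(H - 1/2) * (u + h) ^ γ - (H - 1/2) * u ^ γ|
      = (1/2 - H) * (u ^ γ - (u + h) ^ γ) := habs
    _ ≤ (1/2 - H) * ((u ^ γ) ^ (1/p) * ((-γ) * u ^ (γ - 1) * h) ^ (1 - 1/p)) :=
        mul_le_mul_of_nonneg_left (hmin.trans hinterp) (by linarith)
    _ = ((1/2 - H) * (3/2 - H) ^ (1 - 1/p)) * h ^ (1 - 1/p) * (u ^ (H - 5/2 + 1/p)) := by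
        rw [e1, e2, ← hng]
        rw [show u ^ (γ * (1/p)) * ((-γ) ^ (1 - 1/p) * u ^ ((γ - 1) * (1 - 1/p)) * h ^ (1 - 1/p))
          = (1 * (-γ) ^ (1 - 1/p)) * h ^ (1 - 1/p) * (u ^ (γ * (1/p)) * u ^ ((γ - 1) * (1 - 1/p))) by ring, e3]
        ring

/-- for the power-law kernel `K(t) = t^{H−1/2}`, `H ∈ (0,1/2)`, weight
`w(x) = x^β e^{−x}`, `β ∈ (1−2H,1)`, and `p > 1`: there is a constant `C > 0` such that
for all `h > 0`, `s ≥ 0`, `x > 0`,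
`|K'(s+h+x) − K'(s+x)| ≤ C h^{1−1/p} (s+x)^{H−5/2+1/p}` (with `K'(u) = (H−1/2)u^{H−3/2}`),
and consequently, for all `h, t > 0`,
`∫₀^t ‖K'(·+h+s) − K'(·+s)‖²_{L²_w} ds ≤ C h^{2−2/p} Γ(β+2H−3+2/p)`, provided
`β+2H−3+2/p > 0`. -/
theorem stmt12 (H β p : ℝ)
    (hH : H ∈ Set.Ioo (0:ℝ) (1/2)) (hβ : β ∈ Set.Ioo (1 - 2*H) 1)
    (hp : 1 < p) (hexp : 0 < β + 2*H - 3 + 2/p) :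
    ∃ C : ℝ, 0 < C ∧
      (∀ h : ℝ, 0 < h → ∀ s : ℝ, 0 ≤ s → ∀ x : ℝ, 0 < x →
        |(H - 1/2) * (s + h + x) ^ (H - 3/2) - (H - 1/2) * (s + x) ^ (H - 3/2)|
          ≤ C * h ^ (1 - 1/p) * (s + x) ^ (H - 5/2 + 1/p)) ∧
      (∀ h : ℝ, 0 < h → ∀ t : ℝ, 0 < t →
        (∫ s in Set.Ioc (0:ℝ) t, ∫ x in Set.Ioi (0:ℝ),
            ((H - 1/2) * (s + h + x) ^ (H - 3/2) - (H - 1/2) * (s + x) ^ (H - 3/2)) ^ 2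
              * (x ^ β * Real.exp (-x)))
          ≤ C * h ^ (2 - 2/p) * Real.Gamma (β + 2*H - 3 + 2/p)) := by
  obtain ⟨hH0, hH2⟩ := hH
  obtain ⟨hβ1, hβ2⟩ := hβ
  have hβ0 : 0 < β := by linarith
  have hp0 : 0 < p := by linarith
  have hθ1 : 1/p < 1 := by rw [div_lt_one hp0]; exact hp
  have hθ0 : 0 < 1/p := by positivity
  have h2p : 2/p < 2 := by
    have : 2/p = 2 * (1/p) := by ring
    rw [this]; linarith
  have h2p0 : 0 < 2/p := by positivity
  -- constants
  set C₁ : ℝ := (1/2 - H) * (3/2 - H) ^ (1 - 1/p) with hC₁def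
  have hC₁ : 0 < C₁ := mul_pos (by linarith) (Real.rpow_pos_of_pos (by linarith) _)
  set δ : ℝ := 2*H - 5 + 2/p with hδdef
  have hδ2 : δ < -2 := by rw [hδdef]; linarith
  set m : ℝ := min (β + 2*H - 3 + 2/p) 1 with hmdef
  have hm0 : 0 < m := lt_min hexp one_pos
  have hm1 : m ≤ 1 := min_le_right _ _
  have hmε : m ≤ β + 2*H - 3 + 2/p := min_le_left _ _
  set a' : ℝ := -1 + m/2 with ha'def
  have ha'1 : -1 < a' := by rw [ha'def]; linarith
  have ha'0 : a' < 0 := by rw [ha'def]; linarith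
  have ha'p : 0 < a' + 1 := by linarith
  set b' : ℝ := δ - a' with hb'def
  have hb'0 : b' < 0 := by rw [hb'def]; linarith
  have hbβ : 0 < b' + β + 1 := by
    have : b' + β + 1 = (β + 2*H - 3 + 2/p) - m/2 := by rw [hb'def, hδdef, ha'def]; ring
    rw [this]; linarith
  set K₁ : ℝ := Real.Gamma (b' + β + 1) with hK₁def
  have hK₁ : 0 < K₁ := Real.Gamma_pos_of_pos hbβ
  set K₂ : ℝ := Real.Gamma (β + 1) with hK₂def
  have hK₂ : 0 < K₂ := Real.Gamma_pos_of_pos (by linarith)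
  set D : ℝ := K₁ / (a' + 1) + K₂ / (-δ - 1) with hDdef
  have hD : 0 < D := add_pos (div_pos hK₁ ha'p) (div_pos hK₂ (by linarith))
  have hΓε : 0 < Real.Gamma (β + 2*H - 3 + 2/p) := Real.Gamma_pos_of_pos hexp
  refine ⟨C₁ + C₁^2 * D / Real.Gamma (β + 2*H - 3 + 2/p), by positivity, ?_, ?_⟩
  · intro h hh s hs x hx
    refine (aux_ptwise hH0 hH2 hp hh hs hx).trans ?_
    have hC : C₁ ≤ C₁ + C₁^2 * D / Real.Gamma (β + 2*H - 3 + 2/p) :=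
      le_add_of_nonneg_right (by positivity)
    exact mul_le_mul_of_nonneg_right (mul_le_mul_of_nonneg_right hC (Real.rpow_nonneg hh.le _))
      (Real.rpow_nonneg (by linarith) _)
  · intro h hh t ht
    set M : ℝ := C₁^2 * h ^ (2 - 2/p) with hMdef
    have hM0 : 0 ≤ M := mul_nonneg (sq_nonneg _) (Real.rpow_nonneg hh.le _)
    set f : ℝ → ℝ → ℝ := fun s x =>
      ((H - 1/2) * (s + h + x) ^ (H - 3/2) - (H - 1/2) * (s + x) ^ (H - 3/2)) ^ 2
        * (x ^ β * Real.exp (-x)) with hfdef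
    have esq : ∀ y : ℝ, 0 ≤ y → ∀ c : ℝ, (y ^ c) ^ 2 = y ^ (2 * c) := by
      intro y hy c
      rw [← Real.rpow_natCast (y ^ c) 2, ← Real.rpow_mul hy]
      norm_num [mul_comm]
    have hsq : ∀ s : ℝ, 0 ≤ s → ∀ x : ℝ, 0 < x →
        ((H - 1/2) * (s + h + x) ^ (H - 3/2) - (H - 1/2) * (s + x) ^ (H - 3/2)) ^ 2
          ≤ M * (s + x) ^ δ := by
      intro s hs x hx
      have hu : (0:ℝ) < s + x := by linarith
      calc ((H - 1/2) * (s + h + x) ^ (H - 3/2) - (H - 1/2) * (s + x) ^ (H - 3/2)) ^ 2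
          = |(H - 1/2) * (s + h + x) ^ (H - 3/2) - (H - 1/2) * (s + x) ^ (H - 3/2)| ^ 2 :=
            (sq_abs _).symm
        _ ≤ (C₁ * h ^ (1 - 1/p) * (s + x) ^ (H - 5/2 + 1/p)) ^ 2 :=
            pow_le_pow_left₀ (abs_nonneg _) (aux_ptwise hH0 hH2 hp hh hs hx) 2
        _ = M * (s + x) ^ δ := by
            rw [mul_pow, mul_pow, esq h hh.le, esq (s+x) hu.le,
              show 2 * (1 - 1/p) = 2 - 2/p by ring,
              show 2 * (H - 5/2 + 1/p) = δ by rw [hδdef]; ring, hMdef]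
    have hfnn : ∀ s : ℝ, (0 : ℝ → ℝ) ≤ᵐ[volume.restrict (Ioi 0)] f s := by
      intro s
      refine (ae_restrict_iff' measurableSet_Ioi).mpr (ae_of_all _ fun x hx => ?_)
      exact mul_nonneg (sq_nonneg _)
        (mul_nonneg (Real.rpow_nonneg (le_of_lt hx) β) (Real.exp_nonneg _))
    set ψ : ℝ → ℝ := fun s => if s ≤ 1 then M * K₁ * s ^ a' else M * K₂ * s ^ δ with hψdef
    -- inner bound
    have hinner : ∀ s ∈ Ioc (0:ℝ) t, (∫ x in Ioi (0:ℝ), f s x) ≤ ψ s := by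
      intro s hsm
      have hs0 : 0 < s := hsm.1
      by_cases hs1 : s ≤ 1
      · have hgint : Integrable (fun x => M * s ^ a' *
            (Real.exp (-x) * x ^ (b' + β + 1 - 1))) (volume.restrict (Ioi 0)) :=
          (Real.GammaIntegral_convergent hbβ).const_mul _
        have hle : ∀ x ∈ Ioi (0:ℝ), f s x ≤ M * s ^ a' * (Real.exp (-x) * x ^ (b' + β + 1 - 1)) := by
          intro x hx
          have hx0 : (0:ℝ) < x := hx
          have hu : (0:ℝ) < s + x := by linarith
          have step1 : f s x ≤ M * (s + x) ^ δ * (x ^ β * Real.exp (-x)) :=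
            mul_le_mul_of_nonneg_right (hsq s hs0.le x hx0)
              (mul_nonneg (Real.rpow_nonneg hx0.le β) (Real.exp_nonneg _))
          have step2 : (s + x) ^ δ ≤ s ^ a' * x ^ b' := by
            have : (s + x) ^ δ = (s + x) ^ a' * (s + x) ^ b' := by
              rw [← Real.rpow_add hu, hb'def]; ring_nf
            rw [this]
            exact mul_le_mul (Real.rpow_le_rpow_of_nonpos hs0 (by linarith) ha'0.le)
              (Real.rpow_le_rpow_of_nonpos hx0 (by linarith) hb'0.le)
              (Real.rpow_nonneg hu.le _) (Real.rpow_nonneg hs0.le _)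
          have step3 : M * (s + x) ^ δ * (x ^ β * Real.exp (-x))
              ≤ M * (s ^ a' * x ^ b') * (x ^ β * Real.exp (-x)) := by
            refine mul_le_mul_of_nonneg_right (mul_le_mul_of_nonneg_left step2 hM0) ?_
            exact mul_nonneg (Real.rpow_nonneg hx0.le β) (Real.exp_nonneg _)
          have e : M * (s ^ a' * x ^ b') * (x ^ β * Real.exp (-x))
              = M * s ^ a' * (Real.exp (-x) * x ^ (b' + β + 1 - 1)) := by
            rw [show b' + β + 1 - 1 = b' + β by ring, Real.rpow_add hx0]
            ring
          linarith [step1, step3, e.le]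
        calc (∫ x in Ioi (0:ℝ), f s x)
            ≤ ∫ x in Ioi (0:ℝ), M * s ^ a' * (Real.exp (-x) * x ^ (b' + β + 1 - 1)) :=
              integral_mono_of_nonneg (hfnn s) hgint
                ((ae_restrict_iff' measurableSet_Ioi).mpr (ae_of_all _ hle))
          _ = M * s ^ a' * Real.Gamma (b' + β + 1) := by
              rw [MeasureTheory.integral_const_mul, ← Real.Gamma_eq_integral hbβ]
          _ = ψ s := by rw [hψdef]; simp only [if_pos hs1, hK₁def]; ring
      · have hgint : Integrable (fun x => M * s ^ δ *
            (Real.exp (-x) * x ^ (β + 1 - 1))) (volume.restrict (Ioi 0)) :=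
          (Real.GammaIntegral_convergent (by linarith : (0:ℝ) < β + 1)).const_mul _
        have hle : ∀ x ∈ Ioi (0:ℝ), f s x ≤ M * s ^ δ * (Real.exp (-x) * x ^ (β + 1 - 1)) := by
          intro x hx
          have hx0 : (0:ℝ) < x := hx
          have hu : (0:ℝ) < s + x := by linarith
          have step1 : f s x ≤ M * (s + x) ^ δ * (x ^ β * Real.exp (-x)) :=
            mul_le_mul_of_nonneg_right (hsq s hs0.le x hx0)
              (mul_nonneg (Real.rpow_nonneg hx0.le β) (Real.exp_nonneg _))
          have step2 : (s + x) ^ δ ≤ s ^ δ :=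
            Real.rpow_le_rpow_of_nonpos hs0 (by linarith) (by linarith)
          have step3 : M * (s + x) ^ δ * (x ^ β * Real.exp (-x))
              ≤ M * s ^ δ * (x ^ β * Real.exp (-x)) := by
            refine mul_le_mul_of_nonneg_right (mul_le_mul_of_nonneg_left step2 hM0) ?_
            exact mul_nonneg (Real.rpow_nonneg hx0.le β) (Real.exp_nonneg _)
          have e : M * s ^ δ * (x ^ β * Real.exp (-x))
              = M * s ^ δ * (Real.exp (-x) * x ^ (β + 1 - 1)) := by
            rw [show β + 1 - 1 = β by ring]; ring
          linarith [step1, step3, e.le]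
        calc (∫ x in Ioi (0:ℝ), f s x)
            ≤ ∫ x in Ioi (0:ℝ), M * s ^ δ * (Real.exp (-x) * x ^ (β + 1 - 1)) :=
              integral_mono_of_nonneg (hfnn s) hgint
                ((ae_restrict_iff' measurableSet_Ioi).mpr (ae_of_all _ hle))
          _ = M * s ^ δ * Real.Gamma (β + 1) := by
              rw [MeasureTheory.integral_const_mul, ← Real.Gamma_eq_integral (by linarith : (0:ℝ) < β + 1)]
          _ = ψ s := by rw [hψdef]; simp only [if_neg hs1, hK₂def]; ring
    -- integrability of ψ
    have hi1 : IntegrableOn ψ (Ioc (0:ℝ) 1) := by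
      have hmodel : IntegrableOn (fun s : ℝ => M * K₁ * s ^ a') (Ioc (0:ℝ) 1) :=
        ((intervalIntegral.intervalIntegrable_rpow' ha'1 (a := 0) (b := 1)).1).const_mul _
      exact hmodel.congr_fun (fun s hs => by simp only [hψdef, if_pos hs.2]) measurableSet_Ioc
    have hi2 : IntegrableOn ψ (Ioi (1:ℝ)) := by
      have hmodel : IntegrableOn (fun s : ℝ => M * K₂ * s ^ δ) (Ioi (1:ℝ)) :=
        (integrableOn_Ioi_rpow_of_lt (by linarith : δ < -1) one_pos).const_mul _
      exact hmodel.congr_fun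
        (fun s hs => by simp only [hψdef, if_neg (not_le.mpr (mem_Ioi.mp hs))]) measurableSet_Ioi
    have hψint : IntegrableOn ψ (Ioi (0:ℝ)) := by
      rw [← Ioc_union_Ioi_eq_Ioi (zero_le_one (α := ℝ))]
      exact hi1.union hi2
    have hψnn : (0 : ℝ → ℝ) ≤ᵐ[volume.restrict (Ioi 0)] ψ := by
      refine (ae_restrict_iff' measurableSet_Ioi).mpr (ae_of_all _ fun s hs => ?_)
      have hs0 : (0:ℝ) < s := hs
      rw [hψdef]
      dsimp only
      split
      · exact mul_nonneg (mul_nonneg hM0 hK₁.le) (Real.rpow_nonneg hs0.le _)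
      · exact mul_nonneg (mul_nonneg hM0 hK₂.le) (Real.rpow_nonneg hs0.le _)
    -- outer chain
    have hInnerNN : (0 : ℝ → ℝ) ≤ᵐ[volume.restrict (Ioc 0 t)]
        fun s => ∫ x in Ioi (0:ℝ), f s x :=
      ae_of_all _ fun s => integral_nonneg_of_ae (hfnn s)
    have step_outer1 : (∫ s in Ioc (0:ℝ) t, ∫ x in Ioi (0:ℝ), f s x)
        ≤ ∫ s in Ioc (0:ℝ) t, ψ s :=
      integral_mono_of_nonneg hInnerNN (hψint.mono_set Ioc_subset_Ioi_self)
        ((ae_restrict_iff' measurableSet_Ioc).mpr (ae_of_all _ hinner))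
    have step_outer2 : (∫ s in Ioc (0:ℝ) t, ψ s) ≤ ∫ s in Ioi (0:ℝ), ψ s :=
      setIntegral_mono_set hψint hψnn
        (HasSubset.Subset.eventuallyLE Ioc_subset_Ioi_self)
    have hsplit : (∫ s in Ioi (0:ℝ), ψ s)
        = (∫ s in Ioc (0:ℝ) 1, ψ s) + ∫ s in Ioi (1:ℝ), ψ s := by
      rw [← Ioc_union_Ioi_eq_Ioi (zero_le_one (α := ℝ)),
        setIntegral_union (Ioc_disjoint_Ioi le_rfl) measurableSet_Ioi hi1 hi2]
    have hval1 : (∫ s in Ioc (0:ℝ) 1, ψ s) = M * K₁ * (1 / (a' + 1)) := by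
      rw [setIntegral_congr_fun measurableSet_Ioc
        (fun s hs => by simp only [hψdef, if_pos hs.2] : EqOn ψ (fun s : ℝ => M * K₁ * s ^ a') (Ioc 0 1)),
        MeasureTheory.integral_const_mul,
        ← intervalIntegral.integral_of_le (zero_le_one (α := ℝ)),
        integral_rpow (Or.inl ha'1)]
      rw [Real.one_rpow, Real.zero_rpow (by linarith : a' + 1 ≠ 0)]
      ring
    have hval2 : (∫ s in Ioi (1:ℝ), ψ s) = M * K₂ * (-1 / (δ + 1)) := by
      rw [setIntegral_congr_fun measurableSet_Ioi
        (fun s hs => by simp only [hψdef, if_neg (not_le.mpr (mem_Ioi.mp hs))] :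
          EqOn ψ (fun s : ℝ => M * K₂ * s ^ δ) (Ioi 1)),
        MeasureTheory.integral_const_mul,
        integral_Ioi_rpow_of_lt (by linarith : δ < -1) one_pos]
      rw [Real.one_rpow]
    have htotal : (∫ s in Ioi (0:ℝ), ψ s) = M * D := by
      have e : (-1 : ℝ) / (δ + 1) = 1 / (-δ - 1) := by
        rw [div_eq_div_iff (by linarith : δ + 1 ≠ 0) (by linarith : -δ - 1 ≠ 0)]; ring
      rw [hsplit, hval1, hval2, e, hDdef]
      ring
    have hfinal : M * D ≤ (C₁ + C₁^2 * D / Real.Gamma (β + 2*H - 3 + 2/p)) * h ^ (2 - 2/p)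
        * Real.Gamma (β + 2*H - 3 + 2/p) := by
      have e : (C₁ + C₁^2 * D / Real.Gamma (β + 2*H - 3 + 2/p)) * h ^ (2 - 2/p)
          * Real.Gamma (β + 2*H - 3 + 2/p)
          = C₁ * h ^ (2 - 2/p) * Real.Gamma (β + 2*H - 3 + 2/p)
            + (C₁^2 * D / Real.Gamma (β + 2*H - 3 + 2/p) * Real.Gamma (β + 2*H - 3 + 2/p))
              * h ^ (2 - 2/p) := by ring
      rw [div_mul_cancel₀ _ hΓε.ne'] at e
      have e2 : M * D = C₁^2 * D * h ^ (2 - 2/p) := by rw [hMdef]; ring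
      rw [e, e2]
      have h0 : 0 ≤ C₁ * h ^ (2 - 2/p) * Real.Gamma (β + 2*H - 3 + 2/p) :=
        mul_nonneg (mul_nonneg hC₁.le (Real.rpow_nonneg hh.le _)) hΓε.le
      exact le_add_of_nonneg_left h0
    calc (∫ s in Ioc (0:ℝ) t, ∫ x in Ioi (0:ℝ), f s x)
        ≤ ∫ s in Ioi (0:ℝ), ψ s := step_outer1.trans step_outer2
      _ = M * D := htotal
      _ ≤ _ := hfinal
end
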